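/- arXiv:1504.01123 — 5 statements merged into one kernel-verified Lean document; each statement's English description precedes it below -/
import Mathlib

section
/- Let K be a positive integer, N > 0 a real number, and M_1 ≤ M_2 ≤ ... ≤ M_K real numbers with 0 < M_j ≤ N for all j. Then Σ_{s=1}^{K} Σ_{i=1}^{s} [ (∏_{j=i+1}^{K} M_j/N) · (∏_{j=1}^{i} (1 − M_j/N)) · ( Σ_{S ⊆ {i+1,...,K}, |S| = s−i} ∏_{k ∈ S} (N − M_k)/M_k ) ] = Σ_{i=1}^{K} ∏_{j=1}^{i} (1 − M_j/N), where empty products equal 1 and the inner sum over S equals 1 when s = i (only the empty set). -/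
/-- Lemma 2 / Theorem 3: the traffic-volume formula of the decentralized coded caching
scheme `F_o` with ordered heterogeneous cache set `M_1 ≤ ... ≤ M_K`, `N` contents and
`K` users equals the closed-form expression `∑_{i=1}^K ∏_{j=1}^i (1 - M_j/N)`. -/
theorem traffic_memory_tradeoff_closed_form (K : ℕ) (hK : 0 < K) (N : ℝ) (hN : 0 < N)
    (M : ℕ → ℝ)
    (hmono : ∀ i ∈ Finset.Icc 1 K, ∀ j ∈ Finset.Icc 1 K, i ≤ j → M i ≤ M j)
    (hpos : ∀ j ∈ Finset.Icc 1 K, 0 < M j)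
    (hle : ∀ j ∈ Finset.Icc 1 K, M j ≤ N) :
    ∑ s ∈ Finset.Icc 1 K, ∑ i ∈ Finset.Icc 1 s,
      ((∏ j ∈ Finset.Icc (i + 1) K, M j / N) *
        (∏ j ∈ Finset.Icc 1 i, (1 - M j / N)) *
        (∑ S ∈ (Finset.Icc (i + 1) K).powersetCard (s - i),
          ∏ k ∈ S, (N - M k) / M k))
    = ∑ i ∈ Finset.Icc 1 K, ∏ j ∈ Finset.Icc 1 i, (1 - M j / N) := by
  rw [Finset.sum_comm' (t' := Finset.Icc 1 K) (s' := fun i => Finset.Icc i K)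
    (fun s i => by simp only [Finset.mem_Icc]; omega)]
  refine Finset.sum_congr rfl fun i hi => ?_
  rw [Finset.mem_Icc] at hi
  -- factor out the s-independent part
  rw [← Finset.mul_sum]
  -- collapse the sum over s of sums over subsets of fixed cardinality into a powerset sum
  have hcard : (Finset.Icc (i + 1) K).card = K - i := by
    rw [Nat.card_Icc]; omega
  have hsum : ∑ s ∈ Finset.Icc i K,
      ∑ S ∈ (Finset.Icc (i + 1) K).powersetCard (s - i), ∏ k ∈ S, (N - M k) / M k
      = ∑ S ∈ (Finset.Icc (i + 1) K).powerset, ∏ k ∈ S, (N - M k) / M k := by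
    rw [Finset.sum_powerset, hcard]
    refine Finset.sum_nbij' (fun s => s - i) (fun t => t + i) ?_ ?_ ?_ ?_ ?_ <;>
        simp only [Finset.mem_Icc, Finset.mem_range]
    · intro a ha; omega
    · intro a ha; omega
    · intro a ha; omega
    · intro a ha; omega
    · intro a ha; trivial
  rw [hsum]
  have hps : ∑ S ∈ (Finset.Icc (i + 1) K).powerset, ∏ k ∈ S, (N - M k) / M k
      = ∏ k ∈ Finset.Icc (i + 1) K, ((N - M k) / M k + 1) := by
    rw [Finset.prod_add]; simp
  rw [hps]
  have h1 : (∏ j ∈ Finset.Icc (i + 1) K, M j / N) *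
      ∏ k ∈ Finset.Icc (i + 1) K, ((N - M k) / M k + 1) = 1 := by
    rw [← Finset.prod_mul_distrib]
    refine Finset.prod_eq_one fun k hk => ?_
    rw [Finset.mem_Icc] at hk
    have hMk := hpos k (Finset.mem_Icc.mpr ⟨by omega, hk.2⟩)
    field_simp
    ring
  rw [mul_right_comm, h1, one_mul]
end

section
/- Let K be a positive integer, N > 0 a real number, and M_1 ≤ M_2 ≤ ... ≤ M_K real numbers with 0 ≤ M_j ≤ N for all j. Let M̄ = (1/K) Σ_{k=1}^K M_k. Then Σ_{i=1}^{K} ∏_{j=1}^{i} (1 − M_j/N) ≥ Σ_{i=1}^{K} (1 − M̄/N)^i, with equality if and only if M_1 = M_2 = ... = M_K. -/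
open Finset

private lemma prefix_identity (x : ℕ → ℝ) (a : ℝ) :
    ∀ i : ℕ, (∏ j ∈ Icc 1 i, x j) - a ^ i
      = ∑ m ∈ Icc 1 i, (x m - a) * (∏ j ∈ Icc 1 (m-1), x j) * a ^ (i - m) := by
  intro i
  induction i with
  | zero => simp
  | succ n ih =>
    rw [Finset.sum_Icc_succ_top (Nat.succ_le_succ (Nat.zero_le n)),
        Finset.prod_Icc_succ_top (Nat.succ_le_succ (Nat.zero_le n))]
    have hcong : ∀ m ∈ Icc 1 n, (x m - a) * (∏ j ∈ Icc 1 (m-1), x j) * a ^ (n+1-m)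
        = a * ((x m - a) * (∏ j ∈ Icc 1 (m-1), x j) * a ^ (n-m)) := by
      intro m hm
      rw [Finset.mem_Icc] at hm
      have h1 : n + 1 - m = (n - m) + 1 := by omega
      rw [h1, pow_succ]; ring
    rw [Finset.sum_congr rfl hcong, ← Finset.mul_sum, ← ih]
    simp only [Nat.sub_self, Nat.add_sub_cancel, Nat.succ_sub_one, pow_zero, mul_one, pow_succ]
    ring

private lemma main_identity (x : ℕ → ℝ) (a : ℝ) (K : ℕ) :
    ∑ i ∈ Icc 1 K, ((∏ j ∈ Icc 1 i, x j) - a ^ i)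
      = ∑ m ∈ Icc 1 K, (x m - a) * (∏ j ∈ Icc 1 (m-1), x j) * (∑ t ∈ range (K+1-m), a ^ t) := by
  induction K with
  | zero => simp
  | succ n ih =>
    rw [Finset.sum_Icc_succ_top (Nat.succ_le_succ (Nat.zero_le n)),
        Finset.sum_Icc_succ_top (Nat.succ_le_succ (Nat.zero_le n)), ih,
        prefix_identity x a (n+1),
        Finset.sum_Icc_succ_top (Nat.succ_le_succ (Nat.zero_le n))]
    have hcong : ∀ m ∈ Icc 1 n, (x m - a) * (∏ j ∈ Icc 1 (m-1), x j) * (∑ t ∈ range (n+1+1-m), a ^ t)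
        = (x m - a) * (∏ j ∈ Icc 1 (m-1), x j) * (∑ t ∈ range (n+1-m), a ^ t)
          + (x m - a) * (∏ j ∈ Icc 1 (m-1), x j) * a ^ (n+1-m) := by
      intro m hm
      rw [Finset.mem_Icc] at hm
      have h1 : n + 1 + 1 - m = (n + 1 - m) + 1 := by omega
      rw [h1, Finset.sum_range_succ]; ring
    rw [Finset.sum_congr rfl hcong, Finset.sum_add_distrib]
    have h2 : n + 1 + 1 - (n + 1) = 1 := by omega
    have h3 : n + 1 - (n + 1) = 0 := by omega
    rw [h2, h3]
    simp only [Finset.sum_range_one, Nat.succ_sub_one, pow_zero, mul_one]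
    ring

private lemma abel_identity (d w : ℕ → ℝ) (K : ℕ) :
    ∑ m ∈ Icc 1 K, d m * w m
      = (∑ m ∈ Icc 1 K, (∑ j ∈ Icc 1 m, d j) * (w m - w (m+1)))
        + (∑ j ∈ Icc 1 K, d j) * w (K+1) := by
  induction K with
  | zero => simp
  | succ n ih =>
    rw [Finset.sum_Icc_succ_top (Nat.succ_le_succ (Nat.zero_le n)),
        Finset.sum_Icc_succ_top (Nat.succ_le_succ (Nat.zero_le n)), ih]
    rw [Finset.sum_Icc_succ_top (Nat.succ_le_succ (Nat.zero_le n)) d]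
    ring

private noncomputable def Pp (x : ℕ → ℝ) (i : ℕ) : ℝ := ∏ j ∈ Icc 1 i, x j
private noncomputable def gg (a : ℝ) (n : ℕ) : ℝ := ∑ t ∈ range n, a ^ t
private noncomputable def ww (x : ℕ → ℝ) (a : ℝ) (K m : ℕ) : ℝ :=
  Pp x (m-1) * gg a (K+1-m)

private lemma key_eq (x : ℕ → ℝ) (a : ℝ) (K : ℕ)
    (hd0 : ∑ m ∈ Icc 1 K, (x m - a) = 0) :
    (∑ i ∈ Icc 1 K, ∏ j ∈ Icc 1 i, x j) - (∑ i ∈ Icc 1 K, a ^ i)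
      = ∑ m ∈ Icc 1 K,
          (∑ j ∈ Icc 1 m, (x j - a)) * (ww x a K m - ww x a K (m+1)) := by
  rw [← Finset.sum_sub_distrib, main_identity x a K]
  have h2 := abel_identity (fun m => x m - a) (ww x a K) K
  rw [hd0, zero_mul, add_zero] at h2
  rw [← h2]
  refine Finset.sum_congr rfl fun m hm => ?_
  simp only [ww, Pp, gg]
  ring

private lemma gg_nonneg {a : ℝ} (ha : 0 ≤ a) (n : ℕ) : 0 ≤ gg a n :=
  Finset.sum_nonneg fun t _ => pow_nonneg ha t

private lemma Pp_nonneg {x : ℕ → ℝ} {K : ℕ} (hx0 : ∀ m ∈ Icc 1 K, 0 ≤ x m)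
    {m : ℕ} (hm : m ≤ K) : 0 ≤ Pp x m :=
  Finset.prod_nonneg fun j hj => hx0 j (Finset.mem_Icc.mpr
    ⟨(Finset.mem_Icc.mp hj).1, le_trans (Finset.mem_Icc.mp hj).2 hm⟩)

private lemma Pp_le_one {x : ℕ → ℝ} {K : ℕ} (hx0 : ∀ m ∈ Icc 1 K, 0 ≤ x m)
    (hx1 : ∀ m ∈ Icc 1 K, x m ≤ 1) {m : ℕ} (hm : m ≤ K) : Pp x m ≤ 1 := by
  refine Finset.prod_le_one (fun j hj => ?_) (fun j hj => ?_)
  · rw [Finset.mem_Icc] at hj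
    exact hx0 j (Finset.mem_Icc.mpr ⟨hj.1, le_trans hj.2 hm⟩)
  · rw [Finset.mem_Icc] at hj
    exact hx1 j (Finset.mem_Icc.mpr ⟨hj.1, le_trans hj.2 hm⟩)

private lemma Pp_succ (x : ℕ → ℝ) {m : ℕ} (hm : 1 ≤ m) :
    Pp x m = Pp x (m-1) * x m := by
  have h : m = m - 1 + 1 := by omega
  rw [Pp, Pp]
  conv_lhs => rw [h]
  rw [Finset.prod_Icc_succ_top (Nat.succ_le_succ (Nat.zero_le _)), ← h]

private lemma wstep {x : ℕ → ℝ} {a : ℝ} {K : ℕ} (ha : 0 ≤ a)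
    (hx0 : ∀ m ∈ Icc 1 K, 0 ≤ x m) (hx1 : ∀ m ∈ Icc 1 K, x m ≤ 1)
    {m : ℕ} (hm : m ∈ Icc 1 K) : ww x a K (m+1) ≤ ww x a K m := by
  rw [Finset.mem_Icc] at hm
  have h1 : K + 1 - m = (K - m) + 1 := by omega
  have h2 : K + 1 - (m + 1) = K - m := by omega
  have h3 : m + 1 - 1 = m := by omega
  have hgs : gg a (K+1-m) = gg a (K-m) + a ^ (K-m) := by
    rw [h1, gg, gg, Finset.sum_range_succ]
  have hP : 0 ≤ Pp x (m-1) := Pp_nonneg hx0 (by omega)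
  have hg : 0 ≤ gg a (K-m) := gg_nonneg ha _
  have hpow : 0 ≤ a ^ (K-m) := pow_nonneg ha _
  have hxm1 : x m ≤ 1 := hx1 m (Finset.mem_Icc.mpr hm)
  rw [ww, ww, h2, h3, hgs, Pp_succ x hm.1]
  nlinarith [mul_nonneg hP hpow, mul_nonneg (mul_nonneg hP hg) (sub_nonneg.2 hxm1)]

private lemma Dnn {x : ℕ → ℝ} {a : ℝ} {K : ℕ}
    (hdec : ∀ i ∈ Icc 1 K, ∀ j ∈ Icc 1 K, i ≤ j → x j ≤ x i)
    (hd0 : ∑ m ∈ Icc 1 K, (x m - a) = 0)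
    {m : ℕ} (hm : m ∈ Icc 1 K) : 0 ≤ ∑ j ∈ Icc 1 m, (x j - a) := by
  rw [Finset.mem_Icc] at hm
  rcases eq_or_lt_of_le hm.2 with h | h
  · rw [h]; rw [hd0]
  -- m < K
  have hsplit : (∑ j ∈ Icc 1 m, (x j - a)) + (∑ j ∈ Icc (m+1) K, (x j - a)) = 0 := by
    have e1 : Icc 1 m = Ioc 0 m := by ext t; simp; omega
    have e2 : Icc (m+1) K = Ioc m K := by ext t; simp
    have e3 : Icc 1 K = Ioc 0 K := by ext t; simp; omega
    rw [← hd0, e1, e2, e3]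
    exact Finset.sum_Ioc_consecutive _ (Nat.zero_le m) (le_of_lt h)
  have hhead : (m : ℝ) * (x m - a) ≤ ∑ j ∈ Icc 1 m, (x j - a) := by
    have := Finset.card_nsmul_le_sum (Icc 1 m) (fun j => x j - a) (x m - a)
      (fun j hj => by
        rw [Finset.mem_Icc] at hj
        have := hdec j (Finset.mem_Icc.mpr ⟨hj.1, le_trans hj.2 hm.2⟩) m
          (Finset.mem_Icc.mpr hm) hj.2
        show x m - a ≤ x j - a
        linarith)
    simpa [Nat.card_Icc, nsmul_eq_mul] using this
  have htail : (∑ j ∈ Icc (m+1) K, (x j - a)) ≤ ((K : ℝ) - m) * (x (m+1) - a) := by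
    have := Finset.sum_le_card_nsmul (Icc (m+1) K) (fun j => x j - a) (x (m+1) - a)
      (fun j hj => by
        rw [Finset.mem_Icc] at hj
        have := hdec (m+1) (Finset.mem_Icc.mpr ⟨by omega, by omega⟩) j
          (Finset.mem_Icc.mpr ⟨by omega, hj.2⟩) hj.1
        show x j - a ≤ x (m+1) - a
        linarith)
    have hc : (Icc (m+1) K).card = K - m := by
      rw [Nat.card_Icc]; omega
    rw [hc] at this
    have hcast : ((K - m : ℕ) : ℝ) = (K : ℝ) - m := by
      have : m ≤ K := hm.2
      push_cast [Nat.cast_sub this]; ring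
    simpa [nsmul_eq_mul, hcast] using this
  have hdm : x (m+1) - a ≤ x m - a := by
    have := hdec m (Finset.mem_Icc.mpr hm) (m+1)
      (Finset.mem_Icc.mpr ⟨by omega, by omega⟩) (by omega)
    linarith
  have hm1 : (1 : ℝ) ≤ (m : ℝ) := by exact_mod_cast hm.1
  have hKm : (1 : ℝ) ≤ (K : ℝ) - m := by
    have : m + 1 ≤ K := h
    have : ((m : ℝ) + 1) ≤ K := by exact_mod_cast this
    linarith
  have h1 : ((K:ℝ) - m) * ((m:ℝ) * (x m - a)) ≤ ((K:ℝ) - m) * (∑ j ∈ Icc 1 m, (x j - a)) :=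
    mul_le_mul_of_nonneg_left hhead (by linarith)
  have h2 : (m:ℝ) * (∑ j ∈ Icc (m+1) K, (x j - a)) ≤ (m:ℝ) * (((K:ℝ)-m) * (x (m+1) - a)) :=
    mul_le_mul_of_nonneg_left htail (by linarith)
  have h3 : (m:ℝ) * (((K:ℝ)-m) * (x (m+1) - a)) ≤ (m:ℝ) * (((K:ℝ)-m) * (x m - a)) :=
    mul_le_mul_of_nonneg_left (mul_le_mul_of_nonneg_left hdm (by linarith)) (by linarith)
  nlinarith [h1, h2, h3, hsplit, hm1, hKm]

private lemma Dzero_all {x : ℕ → ℝ} {a : ℝ} {K : ℕ}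
    (hdec : ∀ i ∈ Icc 1 K, ∀ j ∈ Icc 1 K, i ≤ j → x j ≤ x i)
    (hd0 : ∑ m ∈ Icc 1 K, (x m - a) = 0)
    {m : ℕ} (h1 : 1 ≤ m) (h2 : m < K)
    (hD : ∑ j ∈ Icc 1 m, (x j - a) = 0) : ∀ j ∈ Icc 1 K, x j = a := by
  have hmK : m ≤ K := le_of_lt h2
  have hsplit : (∑ j ∈ Icc 1 m, (x j - a)) + (∑ j ∈ Icc (m+1) K, (x j - a)) = 0 := by
    have e1 : Icc 1 m = Ioc 0 m := by ext t; simp; omega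
    have e2 : Icc (m+1) K = Ioc m K := by ext t; simp
    have e3 : Icc 1 K = Ioc 0 K := by ext t; simp; omega
    rw [← hd0, e1, e2, e3]
    exact Finset.sum_Ioc_consecutive _ (Nat.zero_le m) hmK
  have htail0 : ∑ j ∈ Icc (m+1) K, (x j - a) = 0 := by linarith [hsplit, hD]
  have hheadge : ∀ j ∈ Icc 1 m, x m - a ≤ x j - a := by
    intro j hj
    rw [Finset.mem_Icc] at hj
    have := hdec j (Finset.mem_Icc.mpr ⟨hj.1, le_trans hj.2 hmK⟩) m
      (Finset.mem_Icc.mpr ⟨h1, hmK⟩) hj.2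
    linarith
  have htaille : ∀ j ∈ Icc (m+1) K, x j - a ≤ x (m+1) - a := by
    intro j hj
    rw [Finset.mem_Icc] at hj
    have := hdec (m+1) (Finset.mem_Icc.mpr ⟨by omega, by omega⟩) j
      (Finset.mem_Icc.mpr ⟨by omega, hj.2⟩) hj.1
    linarith
  have hhead : (m : ℝ) * (x m - a) ≤ 0 := by
    have := Finset.card_nsmul_le_sum (Icc 1 m) (fun j => x j - a) (x m - a)
      (fun j hj => hheadge j hj)
    rw [hD] at this
    simpa [Nat.card_Icc, nsmul_eq_mul] using this
  have htail : 0 ≤ ((K : ℝ) - m) * (x (m+1) - a) := by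
    have := Finset.sum_le_card_nsmul (Icc (m+1) K) (fun j => x j - a) (x (m+1) - a)
      (fun j hj => htaille j hj)
    rw [htail0] at this
    have hc : (Icc (m+1) K).card = K - m := by rw [Nat.card_Icc]; omega
    rw [hc] at this
    have hcast : ((K - m : ℕ) : ℝ) = (K : ℝ) - m := by
      push_cast [Nat.cast_sub hmK]; ring
    simpa [nsmul_eq_mul, hcast] using this
  have hm1 : (1 : ℝ) ≤ (m : ℝ) := by exact_mod_cast h1
  have hKm : (1 : ℝ) ≤ (K : ℝ) - m := by
    have : ((m : ℝ) + 1) ≤ K := by exact_mod_cast h2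
    linarith
  have hdm : x (m+1) - a ≤ x m - a := by
    have := hdec m (Finset.mem_Icc.mpr ⟨h1, hmK⟩) (m+1)
      (Finset.mem_Icc.mpr ⟨by omega, by omega⟩) (by omega)
    linarith
  have hxm : x m - a = 0 := by nlinarith
  have hxm1 : x (m+1) - a = 0 := by nlinarith
  -- each head term is zero
  have hheadz : ∀ j ∈ Icc 1 m, x j - a = 0 := by
    have := (Finset.sum_eq_zero_iff_of_nonneg (fun j hj => by
      have := hheadge j hj; show 0 ≤ x j - a; linarith)).mp hD
    exact this
  have htailz : ∀ j ∈ Icc (m+1) K, x j - a = 0 := by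
    have hsum' : ∑ j ∈ Icc (m+1) K, (a - x j) = 0 := by
      rw [← neg_eq_zero, ← Finset.sum_neg_distrib]
      simpa [neg_sub] using htail0
    have := (Finset.sum_eq_zero_iff_of_nonneg (fun j hj => by
      have := htaille j hj; show 0 ≤ a - x j; linarith)).mp hsum'
    intro j hj
    have := this j hj
    linarith
  intro j hj
  rw [Finset.mem_Icc] at hj
  rcases le_or_gt j m with h | h
  · have := hheadz j (Finset.mem_Icc.mpr ⟨hj.1, h⟩)
    linarith
  · have := htailz j (Finset.mem_Icc.mpr ⟨h, hj.2⟩)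
    linarith

private lemma gen_lemma (K : ℕ) (hK : 0 < K) (x : ℕ → ℝ) (a : ℝ)
    (hx0 : ∀ m ∈ Icc 1 K, 0 ≤ x m) (hx1 : ∀ m ∈ Icc 1 K, x m ≤ 1)
    (hdec : ∀ i ∈ Icc 1 K, ∀ j ∈ Icc 1 K, i ≤ j → x j ≤ x i)
    (hsum : ∑ m ∈ Icc 1 K, x m = K * a) :
    (∑ i ∈ Icc 1 K, ∏ j ∈ Icc 1 i, x j) ≥ (∑ i ∈ Icc 1 K, a ^ i) ∧
    ((∑ i ∈ Icc 1 K, ∏ j ∈ Icc 1 i, x j) = (∑ i ∈ Icc 1 K, a ^ i) ↔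
      ∀ i ∈ Icc 1 K, ∀ j ∈ Icc 1 K, x i = x j) := by
  have hd0 : ∑ m ∈ Icc 1 K, (x m - a) = 0 := by
    rw [Finset.sum_sub_distrib, hsum, Finset.sum_const, Nat.card_Icc]
    simp [nsmul_eq_mul]
  have hK1 : (1 : ℝ) ≤ (K : ℝ) := by exact_mod_cast hK
  have ha0 : 0 ≤ a := by
    have h1 : 0 ≤ ∑ m ∈ Icc 1 K, x m := Finset.sum_nonneg hx0
    rw [hsum] at h1
    nlinarith
  have key := key_eq x a K hd0
  have hterm : ∀ m ∈ Icc 1 K,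
      0 ≤ (∑ j ∈ Icc 1 m, (x j - a)) * (ww x a K m - ww x a K (m+1)) :=
    fun m hm => mul_nonneg (Dnn hdec hd0 hm) (sub_nonneg.2 (wstep ha0 hx0 hx1 hm))
  have hge : (∑ i ∈ Icc 1 K, ∏ j ∈ Icc 1 i, x j) ≥ (∑ i ∈ Icc 1 K, a ^ i) := by
    have := Finset.sum_nonneg hterm
    linarith [key]
  refine ⟨hge, ?_, ?_⟩
  · intro heq
    by_contra hne
    push_neg at hne
    obtain ⟨i0, hi0, j0, hj0, hnij⟩ := hne
    have hm0 : ∃ m0 ∈ Icc 1 K, x m0 ≠ a := by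
      by_contra hall; push_neg at hall
      exact hnij ((hall i0 hi0).trans (hall j0 hj0).symm)
    obtain ⟨m0, hm0K, hm0ne⟩ := hm0
    have hzero : ∀ m ∈ Icc 1 K,
        (∑ j ∈ Icc 1 m, (x j - a)) * (ww x a K m - ww x a K (m+1)) = 0 :=
      (Finset.sum_eq_zero_iff_of_nonneg hterm).mp (by rw [← key, heq, sub_self])
    have hK2 : 2 ≤ K := by
      by_contra h
      have hK1' : K = 1 := by omega
      rw [hK1', Finset.mem_Icc] at hi0 hj0
      have : i0 = j0 := by omega
      exact hnij (by rw [this])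
    have hDpos : ∀ m, 1 ≤ m → m < K → 0 < ∑ j ∈ Icc 1 m, (x j - a) := by
      intro m h1 h2
      rcases lt_or_eq_of_le (Dnn hdec hd0 (Finset.mem_Icc.mpr ⟨h1, le_of_lt h2⟩)) with h | h
      · exact h
      · exact absurd (Dzero_all hdec hd0 h1 h2 h.symm m0 hm0K) hm0ne
    have hwconst : ∀ m, 1 ≤ m → m ≤ K → ww x a K 1 = ww x a K m := by
      intro m h1 h2
      induction m, h1 using Nat.le_induction with
      | base => rfl
      | succ n hn ih =>
        have hnK : n < K := by omega
        have hterm0 := hzero n (Finset.mem_Icc.mpr ⟨hn, le_of_lt hnK⟩)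
        have hD := hDpos n hn hnK
        have hwn : ww x a K n - ww x a K (n+1) = 0 := by
          rcases mul_eq_zero.mp hterm0 with h | h
          · exact absurd h (ne_of_gt hD)
          · exact h
        rw [ih (by omega)]
        linarith
    have hw1K := hwconst K (by omega) le_rfl
    have hww1 : ww x a K 1 = gg a K := by
      rw [ww]
      simp [Pp]
    have hwwK : ww x a K K = Pp x (K-1) := by
      rw [ww]
      have h : K + 1 - K = 1 := by omega
      rw [h]
      simp [gg]
    have hgK : 1 + a ≤ gg a K := by
      rw [gg]
      calc 1 + a = ∑ t ∈ range 2, a ^ t := by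
            rw [Finset.sum_range_succ, Finset.sum_range_one]; simp
        _ ≤ ∑ t ∈ range K, a ^ t :=
            Finset.sum_le_sum_of_subset_of_nonneg
              (Finset.range_subset_range.mpr hK2) (fun t _ _ => pow_nonneg ha0 t)
    have hPle : Pp x (K-1) ≤ 1 := Pp_le_one hx0 hx1 (by omega)
    have ha : a = 0 := by
      rw [hww1, hwwK] at hw1K
      linarith
    have hxall : ∀ m ∈ Icc 1 K, x m = 0 :=
      (Finset.sum_eq_zero_iff_of_nonneg hx0).mp (by rw [hsum, ha, mul_zero])
    exact hm0ne (by rw [hxall m0 hm0K, ha])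
  · intro hall
    have hKne : (K : ℝ) ≠ 0 := by positivity
    have hxa : ∀ m ∈ Icc 1 K, x m = a := by
      intro m hm
      have hs : ∑ j ∈ Icc 1 K, x j = K * x m := by
        rw [Finset.sum_congr rfl (fun j hj => hall j hj m hm),
            Finset.sum_const, Nat.card_Icc]
        simp [nsmul_eq_mul]
      exact mul_left_cancel₀ hKne (hs.symm.trans hsum)
    refine Finset.sum_congr rfl fun i hi => ?_
    rw [Finset.mem_Icc] at hi
    rw [Finset.prod_congr rfl (fun j hj => hxa j (Finset.mem_Icc.mpr
          ⟨(Finset.mem_Icc.mp hj).1, le_trans (Finset.mem_Icc.mp hj).2 hi.2⟩)),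
        Finset.prod_const, Nat.card_Icc]
    congr 1

/-- Corollary 4 (Relation between two kinds of traffic volume): the heterogeneous
traffic volume `∑_{i=1}^K ∏_{j=1}^i (1 - M_j/N)` is at least the homogeneous one
`∑_{i=1}^K (1 - M̄/N)^i` with `M̄` the average cache size, with equality iff all
cache sizes are equal. -/
theorem traffic_hetero_ge_homo (K : ℕ) (hK : 0 < K) (N : ℝ) (hN : 0 < N) (M : ℕ → ℝ)
    (hmono : ∀ i ∈ Finset.Icc 1 K, ∀ j ∈ Finset.Icc 1 K, i ≤ j → M i ≤ M j)
    (h0 : ∀ j ∈ Finset.Icc 1 K, 0 ≤ M j)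
    (hle : ∀ j ∈ Finset.Icc 1 K, M j ≤ N) :
    (∑ i ∈ Finset.Icc 1 K, ∏ j ∈ Finset.Icc 1 i, (1 - M j / N))
        ≥ ∑ i ∈ Finset.Icc 1 K, (1 - ((∑ k ∈ Finset.Icc 1 K, M k) / K) / N) ^ i
      ∧ ((∑ i ∈ Finset.Icc 1 K, ∏ j ∈ Finset.Icc 1 i, (1 - M j / N))
            = ∑ i ∈ Finset.Icc 1 K, (1 - ((∑ k ∈ Finset.Icc 1 K, M k) / K) / N) ^ i
          ↔ ∀ i ∈ Finset.Icc 1 K, ∀ j ∈ Finset.Icc 1 K, M i = M j) := by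
  have hKne : (K : ℝ) ≠ 0 := Nat.cast_ne_zero.mpr hK.ne'
  have hNne : N ≠ 0 := hN.ne'
  have hx0 : ∀ m ∈ Icc 1 K, 0 ≤ (fun j => 1 - M j / N) m := by
    intro m hm
    have h := hle m hm
    have : M m / N ≤ 1 := (div_le_one hN).mpr h
    simpa using by linarith
  have hx1 : ∀ m ∈ Icc 1 K, (fun j => 1 - M j / N) m ≤ 1 := by
    intro m hm
    have h := h0 m hm
    have : 0 ≤ M m / N := div_nonneg h hN.le
    simpa using by linarith
  have hdec : ∀ i ∈ Icc 1 K, ∀ j ∈ Icc 1 K, i ≤ j →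
      (fun j => 1 - M j / N) j ≤ (fun j => 1 - M j / N) i := by
    intro i hi j hj hij
    have h := hmono i hi j hj hij
    have : M i / N ≤ M j / N := by gcongr
    simpa using by linarith
  have hsum : ∑ m ∈ Icc 1 K, (fun j => 1 - M j / N) m
      = K * (1 - ((∑ k ∈ Finset.Icc 1 K, M k) / K) / N) := by
    simp only
    rw [Finset.sum_sub_distrib, Finset.sum_const, Nat.card_Icc, ← Finset.sum_div]
    have hcard : K + 1 - 1 = K := by omega
    rw [hcard]
    field_simp
    ring
  have hgen := gen_lemma K hK (fun j => 1 - M j / N)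
    (1 - ((∑ k ∈ Finset.Icc 1 K, M k) / K) / N) hx0 hx1 hdec hsum
  refine ⟨hgen.1, hgen.2.trans ?_⟩
  constructor
  · intro h i hi j hj
    have hij := h i hi j hj
    have : M i / N = M j / N := by linarith
    field_simp at this
    exact this
  · intro h i hi j hj
    rw [h i hi j hj]
end

section
/- Let K ≥ 2 be a positive integer, N > 0 a real number, and M_1 ≤ M_2 ≤ ... ≤ M_K real numbers with 0 ≤ M_j ≤ N for all j. Fix i with 1 ≤ i ≤ K − 1 and let M' be the sequence obtained from M by replacing both M_i and M_{i+1} with their average (M_i + M_{i+1})/2 (the sequence M' is still nondecreasing). Then Σ_{t=1}^{K} ∏_{j=1}^{t} (1 − M'_j/N) ≤ Σ_{t=1}^{K} ∏_{j=1}^{t} (1 − M_j/N), with equality if and only if M_i = M_{i+1}. -/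
private lemma traffic_aux (K i : ℕ) (hi1 : 1 ≤ i) (hiK : i + 1 ≤ K) (a b : ℕ → ℝ)
    (ha0 : ∀ j ∈ Finset.Icc 1 K, 0 ≤ a j)
    (ha1 : ∀ j ∈ Finset.Icc 1 K, a j ≤ 1)
    (hanti : ∀ j ∈ Finset.Icc 1 K, ∀ k ∈ Finset.Icc 1 K, j ≤ k → a k ≤ a j)
    (hbi : b i = (a i + a (i + 1)) / 2) (hbi1 : b (i + 1) = (a i + a (i + 1)) / 2)
    (hb : ∀ j, j ≠ i → j ≠ i + 1 → b j = a j) :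
    (∑ t ∈ Finset.Icc 1 K, ∏ j ∈ Finset.Icc 1 t, b j)
      ≤ (∑ t ∈ Finset.Icc 1 K, ∏ j ∈ Finset.Icc 1 t, a j)
    ∧ ((∑ t ∈ Finset.Icc 1 K, ∏ j ∈ Finset.Icc 1 t, b j)
        = (∑ t ∈ Finset.Icc 1 K, ∏ j ∈ Finset.Icc 1 t, a j) ↔ a i = a (i + 1)) := by
  have hiI : i ∈ Finset.Icc 1 K := by simp only [Finset.mem_Icc]; omega
  have hi1I : i + 1 ∈ Finset.Icc 1 K := by simp only [Finset.mem_Icc]; omega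
  set C : ℝ := ∏ j ∈ Finset.Ioc 0 (i - 1), a j with hC_def
  set Q : ℝ := ∑ t ∈ Finset.Ioc i K, ∏ j ∈ Finset.Ioc (i + 1) t, a j with hQ_def
  have hsing : Finset.Ioc (i - 1) i = {i} := by
    ext j; simp only [Finset.mem_Ioc, Finset.mem_singleton]; omega
  have hpair : Finset.Ioc (i - 1) (i + 1) = {i, i + 1} := by
    ext j; simp only [Finset.mem_Ioc, Finset.mem_insert, Finset.mem_singleton]; omega
  have hIcc : ∀ t : ℕ, Finset.Icc 1 t = Finset.Ioc 0 t := fun t => Finset.Icc_add_one_left_eq_Ioc 0 t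
  -- closed form for the a-sum
  have hPi : ∏ j ∈ Finset.Ioc 0 i, a j = C * a i := by
    rw [← Finset.prod_Ioc_consecutive _ (Nat.zero_le (i - 1)) (show i - 1 ≤ i by omega),
        hsing, Finset.prod_singleton]
  have htail : ∑ t ∈ Finset.Ioc i K, ∏ j ∈ Finset.Ioc 0 t, a j
      = C * (a i * a (i + 1)) * Q := by
    rw [hQ_def, Finset.mul_sum]
    refine Finset.sum_congr rfl fun t ht => ?_
    rw [Finset.mem_Ioc] at ht
    rw [← Finset.prod_Ioc_consecutive _ (Nat.zero_le (i - 1)) (show i - 1 ≤ t by omega),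
        ← Finset.prod_Ioc_consecutive _ (show i - 1 ≤ i + 1 by omega) (show i + 1 ≤ t by omega),
        hpair, Finset.prod_insert (by simp), Finset.prod_singleton]
    ring
  have hSa : (∑ t ∈ Finset.Icc 1 K, ∏ j ∈ Finset.Icc 1 t, a j)
      = (∑ t ∈ Finset.Ioc 0 (i - 1), ∏ j ∈ Finset.Ioc 0 t, a j)
        + C * a i + C * (a i * a (i + 1)) * Q := by
    simp only [hIcc]
    rw [← Finset.sum_Ioc_consecutive _ (Nat.zero_le (i - 1)) (show i - 1 ≤ K by omega),
        ← Finset.sum_Ioc_consecutive _ (show i - 1 ≤ i by omega) (show i ≤ K by omega),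
        hsing, Finset.sum_singleton, hPi, htail]
    ring
  -- closed form for the b-sum
  have hCb : ∏ j ∈ Finset.Ioc 0 (i - 1), b j = C := by
    rw [hC_def]
    refine Finset.prod_congr rfl fun j hj => ?_
    rw [Finset.mem_Ioc] at hj
    exact hb j (by omega) (by omega)
  have hPib : ∏ j ∈ Finset.Ioc 0 i, b j = C * ((a i + a (i + 1)) / 2) := by
    rw [← Finset.prod_Ioc_consecutive _ (Nat.zero_le (i - 1)) (show i - 1 ≤ i by omega),
        hsing, Finset.prod_singleton, hCb, hbi]
  have htailb : ∑ t ∈ Finset.Ioc i K, ∏ j ∈ Finset.Ioc 0 t, b j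
      = C * (((a i + a (i + 1)) / 2) * ((a i + a (i + 1)) / 2)) * Q := by
    rw [hQ_def, Finset.mul_sum]
    refine Finset.sum_congr rfl fun t ht => ?_
    rw [Finset.mem_Ioc] at ht
    rw [← Finset.prod_Ioc_consecutive _ (Nat.zero_le (i - 1)) (show i - 1 ≤ t by omega),
        ← Finset.prod_Ioc_consecutive _ (show i - 1 ≤ i + 1 by omega) (show i + 1 ≤ t by omega),
        hpair, Finset.prod_insert (by simp), Finset.prod_singleton, hCb, hbi, hbi1]
    have htl : ∏ j ∈ Finset.Ioc (i + 1) t, b j = ∏ j ∈ Finset.Ioc (i + 1) t, a j := by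
      refine Finset.prod_congr rfl fun j hj => ?_
      rw [Finset.mem_Ioc] at hj
      exact hb j (by omega) (by omega)
    rw [htl]; ring
  have hpreb : ∑ t ∈ Finset.Ioc 0 (i - 1), ∏ j ∈ Finset.Ioc 0 t, b j
      = ∑ t ∈ Finset.Ioc 0 (i - 1), ∏ j ∈ Finset.Ioc 0 t, a j := by
    refine Finset.sum_congr rfl fun t ht => ?_
    rw [Finset.mem_Ioc] at ht
    refine Finset.prod_congr rfl fun j hj => ?_
    rw [Finset.mem_Ioc] at hj
    exact hb j (by omega) (by omega)
  have hSb : (∑ t ∈ Finset.Icc 1 K, ∏ j ∈ Finset.Icc 1 t, b j)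
      = (∑ t ∈ Finset.Ioc 0 (i - 1), ∏ j ∈ Finset.Ioc 0 t, a j)
        + C * ((a i + a (i + 1)) / 2)
        + C * (((a i + a (i + 1)) / 2) * ((a i + a (i + 1)) / 2)) * Q := by
    simp only [hIcc]
    rw [← Finset.sum_Ioc_consecutive _ (Nat.zero_le (i - 1)) (show i - 1 ≤ K by omega),
        ← Finset.sum_Ioc_consecutive _ (show i - 1 ≤ i by omega) (show i ≤ K by omega),
        hsing, Finset.sum_singleton, hPib, htailb, hpreb]
    ring
  -- the key identity
  have main : (∑ t ∈ Finset.Icc 1 K, ∏ j ∈ Finset.Icc 1 t, a j)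
      - (∑ t ∈ Finset.Icc 1 K, ∏ j ∈ Finset.Icc 1 t, b j)
      = C * (a i - a (i + 1)) / 2 - C * ((a i - a (i + 1)) ^ 2 / 4) * Q := by
    rw [hSa, hSb]; ring
  -- bounds
  have hd0 : 0 ≤ a i - a (i + 1) := by
    have := hanti i hiI (i + 1) hi1I (by omega); linarith
  have hy0 : 0 ≤ a (i + 1) := ha0 _ hi1I
  have hx1 : a i ≤ 1 := ha1 _ hiI
  have hC0 : 0 ≤ C := by
    refine Finset.prod_nonneg fun j hj => ?_
    rw [Finset.mem_Ioc] at hj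
    exact ha0 j (by simp only [Finset.mem_Icc]; omega)
  have hdQ : (a i - a (i + 1)) * Q ≤ 1 := by
    have hstep1 : Q ≤ ∑ t ∈ Finset.Ioc i K, a (i + 1) ^ (t - (i + 1)) := by
      rw [hQ_def]
      refine Finset.sum_le_sum fun t ht => ?_
      rw [Finset.mem_Ioc] at ht
      calc ∏ j ∈ Finset.Ioc (i + 1) t, a j
          ≤ ∏ _j ∈ Finset.Ioc (i + 1) t, a (i + 1) := by
            refine Finset.prod_le_prod (fun j hj => ?_) (fun j hj => ?_)
            · rw [Finset.mem_Ioc] at hj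
              exact ha0 j (by simp only [Finset.mem_Icc]; omega)
            · rw [Finset.mem_Ioc] at hj
              exact hanti (i + 1) hi1I j (by simp only [Finset.mem_Icc]; omega) (by omega)
        _ = a (i + 1) ^ (t - (i + 1)) := by rw [Finset.prod_const, Nat.card_Ioc]
    have hstep2 : ∑ t ∈ Finset.Ioc i K, a (i + 1) ^ (t - (i + 1))
        = ∑ k ∈ Finset.range (K - i), a (i + 1) ^ k := by
      rw [← Finset.Icc_add_one_left_eq_Ioc, ← Finset.Ico_add_one_right_eq_Icc, Finset.sum_Ico_eq_sum_range,
          show K + 1 - (i + 1) = K - i by omega]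
      exact Finset.sum_congr rfl fun k _ => by rw [show i + 1 + k - (i + 1) = k by omega]
    have hsum0 : 0 ≤ ∑ k ∈ Finset.range (K - i), a (i + 1) ^ k :=
      Finset.sum_nonneg fun k _ => pow_nonneg hy0 k
    have hgeom : (1 - a (i + 1)) * ∑ k ∈ Finset.range (K - i), a (i + 1) ^ k
        = 1 - a (i + 1) ^ (K - i) := by
      linear_combination -geom_sum_mul (a (i + 1)) (K - i)
    have hpow : 0 ≤ a (i + 1) ^ (K - i) := pow_nonneg hy0 _
    calc (a i - a (i + 1)) * Q
        ≤ (a i - a (i + 1)) * ∑ t ∈ Finset.Ioc i K, a (i + 1) ^ (t - (i + 1)) :=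
          mul_le_mul_of_nonneg_left hstep1 hd0
      _ = (a i - a (i + 1)) * ∑ k ∈ Finset.range (K - i), a (i + 1) ^ k := by rw [hstep2]
      _ ≤ (1 - a (i + 1)) * ∑ k ∈ Finset.range (K - i), a (i + 1) ^ k :=
          mul_le_mul_of_nonneg_right (by linarith) hsum0
      _ = 1 - a (i + 1) ^ (K - i) := hgeom
      _ ≤ 1 := by linarith
  have hCpos : a (i + 1) < a i → 0 < C * (a i - a (i + 1)) := by
    intro hlt
    have hx : 0 < a i := lt_of_le_of_lt hy0 hlt
    have hCp : 0 < C := by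
      refine Finset.prod_pos fun j hj => ?_
      rw [Finset.mem_Ioc] at hj
      exact lt_of_lt_of_le hx
        (hanti j (by simp only [Finset.mem_Icc]; omega) i hiI (by omega))
    exact mul_pos hCp (by linarith)
  have hcd : 0 ≤ C * (a i - a (i + 1)) := mul_nonneg hC0 hd0
  have h1 : C * (a i - a (i + 1)) * ((a i - a (i + 1)) * Q)
      ≤ C * (a i - a (i + 1)) * 1 := mul_le_mul_of_nonneg_left hdQ hcd
  refine ⟨by linarith [main, h1, hcd], ?_, ?_⟩
  · intro heq
    by_contra hne
    have hlt : a (i + 1) < a i := lt_of_le_of_ne (by linarith) (fun h => hne h.symm)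
    have hpos := hCpos hlt
    linarith [main, h1]
  · intro heq
    rw [show a i - a (i + 1) = 0 by rw [heq]; ring] at main
    linarith [main]

/-- The averaging step in the proof of Corollary 4: replacing two adjacent cache sizes
`M_i ≤ M_{i+1}` by their common average never increases the traffic-volume formula,
and strictly decreases it unless `M_i = M_{i+1}`. -/
theorem traffic_averaging_step (K : ℕ) (hK : 2 ≤ K) (N : ℝ) (hN : 0 < N) (M : ℕ → ℝ)
    (hmono : ∀ i ∈ Finset.Icc 1 K, ∀ j ∈ Finset.Icc 1 K, i ≤ j → M i ≤ M j)
    (h0 : ∀ j ∈ Finset.Icc 1 K, 0 ≤ M j)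
    (hle : ∀ j ∈ Finset.Icc 1 K, M j ≤ N)
    (i : ℕ) (hi1 : 1 ≤ i) (hiK : i ≤ K - 1)
    (M' : ℕ → ℝ)
    (hM' : ∀ j, M' j = if j = i ∨ j = i + 1 then (M i + M (i + 1)) / 2 else M j) :
    (∑ t ∈ Finset.Icc 1 K, ∏ j ∈ Finset.Icc 1 t, (1 - M' j / N))
        ≤ ∑ t ∈ Finset.Icc 1 K, ∏ j ∈ Finset.Icc 1 t, (1 - M j / N)
      ∧ ((∑ t ∈ Finset.Icc 1 K, ∏ j ∈ Finset.Icc 1 t, (1 - M' j / N))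
            = ∑ t ∈ Finset.Icc 1 K, ∏ j ∈ Finset.Icc 1 t, (1 - M j / N)
          ↔ M i = M (i + 1)) := by
  have hN0 : N ≠ 0 := ne_of_gt hN
  have h := traffic_aux K i hi1 (by omega) (fun j => 1 - M j / N) (fun j => 1 - M' j / N)
    (by intro j hj
        show 0 ≤ 1 - M j / N
        have h1 : M j / N ≤ 1 := (div_le_one hN).mpr (hle j hj)
        linarith)
    (by intro j hj
        show 1 - M j / N ≤ 1
        have h1 : 0 ≤ M j / N := div_nonneg (h0 j hj) hN.le
        linarith)
    (by intro j hj k hk hjk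
        show 1 - M k / N ≤ 1 - M j / N
        have h1 : M j / N ≤ M k / N := by gcongr; exact hmono j hj k hk hjk
        linarith)
    (by show 1 - M' i / N = _
        rw [hM' i, if_pos (Or.inl rfl)]; ring)
    (by show 1 - M' (i + 1) / N = _
        rw [hM' (i + 1), if_pos (Or.inr rfl)]; ring)
    (by intro j hj1 hj2
        show 1 - M' j / N = 1 - M j / N
        rw [hM' j, if_neg (by tauto)])
  obtain ⟨h1, h2⟩ := h
  refine ⟨h1, h2.trans ?_⟩
  constructor
  · intro hh
    have hh' : M i / N = M (i + 1) / N := by linarith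
    field_simp at hh'
    exact hh'
  · intro hh
    simp only [hh]
end

section
/- Let K be a positive integer, N > 0 a real number, and M_1 ≤ M_2 ≤ ... ≤ M_K real numbers with 0 ≤ M_j ≤ N for all j. Define g(s) = s − s·(Σ_{i=1}^{s} M_i)/N for integer s with 1 ≤ s ≤ K. Suppose s* with 1 ≤ s* ≤ K satisfies Σ_{i=1}^{s*} M_i + (s* − 1)·M_{s*} ≤ N, and additionally either s* = K or Σ_{i=1}^{s*+1} M_i + s*·M_{s*+1} > N. Then g(s*) ≥ g(s) for every integer s with 1 ≤ s ≤ K. -/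
/-- Insight (1) on the lower bound: for ordered cache sizes the (continuously relaxed)
cut-set bound `g(s) = s - s (∑_{i=1}^s M_i)/N` attains its maximum over `1 ≤ s ≤ K` at
the `s⋆` determined by `∑_{i=1}^{s⋆} M_i + (s⋆-1) M_{s⋆} ≤ N` and (unless `s⋆ = K`)
`∑_{i=1}^{s⋆+1} M_i + s⋆ M_{s⋆+1} > N`. -/
theorem cutset_maximizer_characterization (K : ℕ) (hK : 0 < K) (N : ℝ) (hN : 0 < N)
    (M : ℕ → ℝ)
    (hmono : ∀ i ∈ Finset.Icc 1 K, ∀ j ∈ Finset.Icc 1 K, i ≤ j → M i ≤ M j)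
    (h0 : ∀ j ∈ Finset.Icc 1 K, 0 ≤ M j)
    (hle : ∀ j ∈ Finset.Icc 1 K, M j ≤ N)
    (sstar : ℕ) (hs1 : 1 ≤ sstar) (hsK : sstar ≤ K)
    (hcond1 : (∑ i ∈ Finset.Icc 1 sstar, M i) + ((sstar : ℝ) - 1) * M sstar ≤ N)
    (hcond2 : sstar = K ∨
      (∑ i ∈ Finset.Icc 1 (sstar + 1), M i) + (sstar : ℝ) * M (sstar + 1) > N) :
    ∀ s ∈ Finset.Icc 1 K,
      (sstar : ℝ) - (sstar : ℝ) * (∑ i ∈ Finset.Icc 1 sstar, M i) / N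
        ≥ (s : ℝ) - (s : ℝ) * (∑ i ∈ Finset.Icc 1 s, M i) / N := by
  set S : ℕ → ℝ := fun s => ∑ i ∈ Finset.Icc 1 s, M i with hS
  set g : ℕ → ℝ := fun s => (s:ℝ) - (s:ℝ) * S s / N with hg
  set f : ℕ → ℝ := fun s => S s + ((s:ℝ) - 1) * M s with hf
  have hSsucc : ∀ s : ℕ, S (s+1) = S s + M (s+1) := by
    intro s
    simp [hS, Finset.sum_Icc_succ_top (Nat.le_add_left 1 s)]
  have hfs : ∀ s : ℕ, f (s+1) = S s + ((s:ℝ)+1) * M (s+1) := by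
    intro s
    simp only [hf, hSsucc]
    push_cast
    ring
  have hstep : ∀ s : ℕ, g (s+1) = g s + (N - f (s+1)) / N := by
    intro s
    simp only [hg, hfs, hSsucc]
    field_simp
    push_cast
    ring
  have fmono : ∀ a b : ℕ, 1 ≤ a → a ≤ b → b ≤ K → f a ≤ f b := by
    intro a b ha hab
    induction b, hab using Nat.le_induction with
    | base => intro _; exact le_refl _
    | succ n hn ih =>
      intro hnK
      have hnK' : n ≤ K := Nat.le_of_succ_le hnK
      have h1n : 1 ≤ n := le_trans ha hn
      have hMn : 0 ≤ M n := h0 n (Finset.mem_Icc.mpr ⟨h1n, hnK'⟩)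
      have hMm : M n ≤ M (n+1) :=
        hmono n (Finset.mem_Icc.mpr ⟨h1n, hnK'⟩) (n+1)
          (Finset.mem_Icc.mpr ⟨by omega, hnK⟩) (by omega)
      have hdiff : f (n+1) - f n = ((n:ℝ)+1) * M (n+1) - ((n:ℝ)-1) * M n := by
        simp only [hf, hSsucc]
        push_cast
        ring
      have hn1 : (1:ℝ) ≤ (n:ℝ) := by exact_mod_cast h1n
      have : f n ≤ f (n+1) := by nlinarith
      exact le_trans (ih hnK') this
  have hcond1' : f sstar ≤ N := hcond1
  -- g nondecreasing up to sstar
  have gA : ∀ a b : ℕ, 1 ≤ a → a ≤ b → b ≤ sstar → g a ≤ g b := by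
    intro a b ha hab
    induction b, hab using Nat.le_induction with
    | base => intro _; exact le_refl _
    | succ n hn ih =>
      intro hns
      have hns' : n ≤ sstar := Nat.le_of_succ_le hns
      have hfle : f (n+1) ≤ N :=
        le_trans (fmono (n+1) sstar (by omega) hns hsK) hcond1'
      have : g n ≤ g (n+1) := by
        rw [hstep n]
        have : 0 ≤ (N - f (n+1)) / N := div_nonneg (by linarith) hN.le
        linarith
      exact le_trans (ih hns') this
  -- g nonincreasing after sstar
  have gB : ∀ b : ℕ, sstar ≤ b → b ≤ K → g b ≤ g sstar := by
    intro b hab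
    induction b, hab using Nat.le_induction with
    | base => intro _; exact le_refl _
    | succ n hn ih =>
      intro hnK
      have hnK' : n ≤ K := Nat.le_of_succ_le hnK
      rcases hcond2 with h | h
      · omega
      · have hfgt : N < f (n+1) := by
          have : f (sstar+1) ≤ f (n+1) :=
            fmono (sstar+1) (n+1) (by omega) (by omega) hnK
          have h' : N < f (sstar+1) := by
            simp only [hf]
            push_cast
            have hh : N < S (sstar+1) + (sstar:ℝ) * M (sstar+1) := h
            linarith
          linarith
        have : g (n+1) ≤ g n := by
          rw [hstep n]
          have : (N - f (n+1)) / N ≤ 0 :=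
            div_nonpos_of_nonpos_of_nonneg (by linarith) hN.le
          linarith
        exact le_trans this (ih hnK')
  intro s hs
  rw [Finset.mem_Icc] at hs
  rcases le_total s sstar with h | h
  · exact gA s sstar hs.1 h le_rfl
  · exact gB s h hs.2
end

section
/- Let N and K be positive integers with K ≤ N, and let M_1 ≤ M_2 ≤ ... ≤ M_K be real numbers with 0 ≤ M_j ≤ N for all j. Then Σ_{i=1}^{K} ∏_{j=1}^{i} (1 − M_j/N) ≤ 12 · max_{1 ≤ s ≤ K} ( s − (Σ_{i=1}^{s} M_i)/⌊N/s⌋ ), where ⌊N/s⌋ denotes integer floor division (note ⌊N/s⌋ ≥ 1 since s ≤ K ≤ N). -/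
lemma geom_tail (r : ℝ) (h0 : 0 ≤ r) (h1 : r < 1) (c K : ℕ) :
    ∑ i ∈ Finset.Icc (c+1) K, r ^ (i - c) ≤ r / (1 - r) := by
  rw [← Finset.Ico_add_one_right_eq_Icc, Finset.sum_Ico_eq_sum_range]
  have h1' : (0:ℝ) < 1 - r := by linarith
  have hcong : ∀ j ∈ Finset.range (K + 1 - (c+1)), r ^ (c + 1 + j - c) = r * r ^ j := by
    intro j _
    have h : c + 1 + j - c = j + 1 := by omega
    rw [h, pow_succ]; ring
  rw [Finset.sum_congr rfl hcong, ← Finset.mul_sum]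
  have hg : ∑ j ∈ Finset.range (K + 1 - (c+1)), r ^ j ≤ 1 / (1 - r) := by
    rw [geom_sum_eq (by linarith : r ≠ 1)]
    have heq : (r ^ (K + 1 - (c+1)) - 1) / (r - 1)
        = (1 - r ^ (K + 1 - (c+1))) / (1 - r) := by
      rw [← neg_sub 1 (r ^ (K + 1 - (c+1))), ← neg_sub 1 r, neg_div_neg_eq]
    rw [heq, div_le_div_iff₀ h1' h1']
    have : r ^ (K + 1 - (c+1)) ≥ 0 := pow_nonneg h0 _
    nlinarith
  calc r * ∑ j ∈ Finset.range (K + 1 - (c+1)), r ^ j ≤ r * (1/(1-r)) :=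
        mul_le_mul_of_nonneg_left hg h0
    _ = r / (1-r) := by ring

lemma split_sum (f : ℕ → ℝ) (a b : ℕ) (hab : a ≤ b) :
    ∑ i ∈ Finset.Icc 1 b, f i
      = (∑ i ∈ Finset.Icc 1 a, f i) + ∑ i ∈ Finset.Icc (a+1) b, f i := by
  rw [show (1:ℕ) = 0 + 1 from rfl, Finset.Icc_add_one_left_eq_Ioc, Finset.Icc_add_one_left_eq_Ioc,
    show Finset.Icc (a + (0 + 1)) b = Finset.Ioc a b from Finset.Icc_add_one_left_eq_Ioc a b,
    Finset.sum_Ioc_consecutive f (Nat.zero_le a) hab]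

set_option maxHeartbeats 2000000 in
/-- Theorem 4 (Order optimality of scheme `F_o`): with `K ≤ N` users, the traffic volume
of the decentralized coded caching scheme with zero-padding is within a factor `12` of
the cut-set bound `max_{1 ≤ s ≤ K} (s - (∑_{i=1}^s M_i)/⌊N/s⌋)`. -/
theorem order_optimality (N K : ℕ) (hN : 0 < N) (hK : 0 < K) (hKN : K ≤ N)
    (M : ℕ → ℝ)
    (hmono : ∀ i ∈ Finset.Icc 1 K, ∀ j ∈ Finset.Icc 1 K, i ≤ j → M i ≤ M j)
    (h0 : ∀ j ∈ Finset.Icc 1 K, 0 ≤ M j)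
    (hle : ∀ j ∈ Finset.Icc 1 K, M j ≤ (N : ℝ)) :
    (∑ i ∈ Finset.Icc 1 K, ∏ j ∈ Finset.Icc 1 i, (1 - M j / (N : ℝ)))
      ≤ 12 * (Finset.Icc 1 K).sup' (Finset.nonempty_Icc.mpr hK)
          (fun s => (s : ℝ) - (∑ i ∈ Finset.Icc 1 s, M i) / ((N / s : ℕ) : ℝ)) := by
  have hNR : (0:ℝ) < N := Nat.cast_pos.mpr hN
  set T := (Finset.Icc 1 K).sup' (Finset.nonempty_Icc.mpr hK)
          (fun s => (s : ℝ) - (∑ i ∈ Finset.Icc 1 s, M i) / ((N / s : ℕ) : ℝ)) with hT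
  have hcut : ∀ s ∈ Finset.Icc 1 K,
      (s:ℝ) - (∑ i ∈ Finset.Icc 1 s, M i) / ((N / s : ℕ) : ℝ) ≤ T :=
    fun s hs => Finset.le_sup'
      (fun t : ℕ => (t : ℝ) - (∑ i ∈ Finset.Icc 1 t, M i) / ((N / t : ℕ) : ℝ)) hs
  clear_value T
  -- basic facts
  have hx0 : ∀ j ∈ Finset.Icc 1 K, 0 ≤ 1 - M j / (N:ℝ) := by
    intro j hj
    rw [sub_nonneg, div_le_one hNR]; exact hle j hj
  have hx1 : ∀ j ∈ Finset.Icc 1 K, 1 - M j / (N:ℝ) ≤ 1 := by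
    intro j hj
    have h1 : 0 ≤ M j / (N:ℝ) := div_nonneg (h0 j hj) hNR.le
    linarith
  have hsub : ∀ i ∈ Finset.Icc 1 K, Finset.Icc 1 i ⊆ Finset.Icc 1 K := by
    intro i hi
    exact Finset.Icc_subset_Icc_right (Finset.mem_Icc.mp hi).2
  have hP0 : ∀ i ∈ Finset.Icc 1 K, 0 ≤ ∏ j ∈ Finset.Icc 1 i, (1 - M j / (N:ℝ)) := by
    intro i hi
    exact Finset.prod_nonneg (fun j hj => hx0 j (hsub i hi hj))
  have hP1 : ∀ i ∈ Finset.Icc 1 K, ∏ j ∈ Finset.Icc 1 i, (1 - M j / (N:ℝ)) ≤ 1 := by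
    intro i hi
    exact Finset.prod_le_one (fun j hj => hx0 j (hsub i hi hj))
      (fun j hj => hx1 j (hsub i hi hj))
  have haR : ∀ s ∈ Finset.Icc 1 K, 0 ≤ ∑ i ∈ Finset.Icc 1 s, M i := by
    intro s hs
    exact Finset.sum_nonneg (fun i hi => h0 i (hsub s hs hi))
  -- floor facts
  have hd1 : ∀ s ∈ Finset.Icc 1 K, 1 ≤ N / s := by
    intro s hs
    rcases Finset.mem_Icc.mp hs with ⟨h1, h2⟩
    exact (Nat.one_le_div_iff (by omega)).mpr (le_trans h2 hKN)
  have hd2 : ∀ s ∈ Finset.Icc 1 K, (N:ℝ) ≤ 2 * s * ((N / s : ℕ) : ℝ) := by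
    intro s hs
    rcases Finset.mem_Icc.mp hs with ⟨h1, h2⟩
    have hs0 : 0 < s := by omega
    have hnat : N ≤ 2 * s * (N / s) := by
      have hdm := Nat.div_add_mod N s
      have hm := Nat.mod_lt N hs0
      have h1d := hd1 s hs
      nlinarith
    exact_mod_cast Nat.cast_le.mpr hnat
  have hdpos : ∀ s ∈ Finset.Icc 1 K, (0:ℝ) < ((N / s : ℕ) : ℝ) := by
    intro s hs
    exact_mod_cast Nat.lt_of_lt_of_le Nat.zero_lt_one (hd1 s hs)
  -- T ≥ s/2 whenever partial sum ≤ N/4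
  have hThalf : ∀ s ∈ Finset.Icc 1 K,
      (∑ i ∈ Finset.Icc 1 s, M i) ≤ (N:ℝ)/4 → (s:ℝ)/2 ≤ T := by
    intro s hs ha
    have hd := hdpos s hs
    have h2 := hd2 s hs
    have hspos : (1:ℝ) ≤ s := by exact_mod_cast (Finset.mem_Icc.mp hs).1
    have hkey : (∑ i ∈ Finset.Icc 1 s, M i) / ((N / s : ℕ) : ℝ) ≤ (s:ℝ)/2 := by
      rw [div_le_div_iff₀ hd (by norm_num : (0:ℝ) < 2)]
      nlinarith
    have := hcut s hs
    linarith

  -- the set of s where the partial cache sum is at most N/4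
  set S := (Finset.Icc 1 K).filter
      (fun s => (∑ i ∈ Finset.Icc 1 s, M i) ≤ (N:ℝ)/4) with hSdef
  by_cases hS : S.Nonempty
  · -- S nonempty: let s₂ be its largest element
    set s₂ := S.max' hS with hs₂def
    have hs₂S : s₂ ∈ S := S.max'_mem hS
    have hmaxS : ∀ s ∈ S, s ≤ s₂ := fun s hs => S.le_max' s hs
    clear_value s₂
    rw [hSdef, Finset.mem_filter] at hs₂S
    obtain ⟨hs₂Icc, hs₂a⟩ := hs₂S
    rcases Finset.mem_Icc.mp hs₂Icc with ⟨hs₂1, hs₂K⟩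
    have hTs : (s₂:ℝ)/2 ≤ T := hThalf s₂ hs₂Icc hs₂a
    have hs₂R : (1:ℝ) ≤ (s₂:ℝ) := by exact_mod_cast hs₂1
    have hhead : ∑ i ∈ Finset.Icc 1 s₂, ∏ j ∈ Finset.Icc 1 i, (1 - M j / (N:ℝ)) ≤ (s₂:ℝ) := by
      calc ∑ i ∈ Finset.Icc 1 s₂, ∏ j ∈ Finset.Icc 1 i, (1 - M j / (N:ℝ))
          ≤ ∑ _i ∈ Finset.Icc 1 s₂, (1:ℝ) :=
            Finset.sum_le_sum (fun i hi => hP1 i (hsub s₂ hs₂Icc hi))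
        _ = (s₂:ℝ) := by rw [Finset.sum_const, Nat.card_Icc]; simp
    rcases eq_or_lt_of_le hs₂K with heq | hlt
    · -- s₂ = K : no tail
      have hgoal : ∑ i ∈ Finset.Icc 1 K, ∏ j ∈ Finset.Icc 1 i, (1 - M j / (N:ℝ)) ≤ (s₂:ℝ) := by
        rw [← heq]; exact hhead
      linarith
    · -- s₂ < K
      have hmem : s₂+1 ∈ Finset.Icc 1 K := Finset.mem_Icc.mpr ⟨by omega, hlt⟩
      have hnot : s₂+1 ∉ S := by
        intro h
        have := hmaxS _ h
        omega
      have hagt : (N:ℝ)/4 < ∑ i ∈ Finset.Icc 1 (s₂+1), M i := by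
        by_contra h
        push_neg at h
        exact hnot (Finset.mem_filter.mpr ⟨hmem, h⟩)
      have hasum : ∑ i ∈ Finset.Icc 1 (s₂+1), M i ≤ ((s₂:ℝ)+1) * M (s₂+1) := by
        calc ∑ i ∈ Finset.Icc 1 (s₂+1), M i ≤ ∑ _i ∈ Finset.Icc 1 (s₂+1), M (s₂+1) :=
              Finset.sum_le_sum (fun i hi =>
                hmono i (hsub _ hmem hi) (s₂+1) hmem (Finset.mem_Icc.mp hi).2)
          _ = ((s₂:ℝ)+1) * M (s₂+1) := by
              rw [Finset.sum_const, Nat.card_Icc]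
              push_cast
              ring
      have hMgt : (N:ℝ)/4 < ((s₂:ℝ)+1) * M (s₂+1) := lt_of_lt_of_le hagt hasum
      set r := 1 - M (s₂+1)/(N:ℝ) with hr
      clear_value r
      have hr0 : 0 ≤ r := by rw [hr]; exact hx0 _ hmem
      have hMpos : 0 < M (s₂+1) := by nlinarith
      have hr1 : r < 1 := by
        have : 0 < M (s₂+1)/(N:ℝ) := div_pos hMpos hNR
        rw [hr]; linarith
      have h1r : 1/(4*((s₂:ℝ)+1)) < 1 - r := by
        rw [hr]
        have h4 : (0:ℝ) < 4*((s₂:ℝ)+1) := by positivity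
        rw [show (1:ℝ) - (1 - M (s₂+1)/(N:ℝ)) = M (s₂+1)/(N:ℝ) by ring,
          div_lt_div_iff₀ h4 hNR]
        nlinarith
      have htail1 : ∀ i ∈ Finset.Icc (s₂+1) K,
          ∏ j ∈ Finset.Icc 1 i, (1 - M j / (N:ℝ)) ≤ r ^ (i - s₂) := by
        intro i hi
        rcases Finset.mem_Icc.mp hi with ⟨hi1, hi2⟩
        have hiK : i ∈ Finset.Icc 1 K := Finset.mem_Icc.mpr ⟨by omega, hi2⟩
        have hioc : ∀ j ∈ Finset.Ioc s₂ i, j ∈ Finset.Icc 1 K := by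
          intro j hj
          rcases Finset.mem_Ioc.mp hj with ⟨hj1, hj2⟩
          exact Finset.mem_Icc.mpr ⟨by omega, by omega⟩
        have hsplitP : ∏ j ∈ Finset.Icc 1 i, (1 - M j/(N:ℝ))
            = (∏ j ∈ Finset.Ioc 0 s₂, (1 - M j/(N:ℝ)))
              * ∏ j ∈ Finset.Ioc s₂ i, (1 - M j/(N:ℝ)) := by
          rw [Finset.prod_Ioc_consecutive _ (Nat.zero_le s₂) (by omega : s₂ ≤ i)]
          rw [show Finset.Icc 1 i = Finset.Ioc 0 i from Finset.Icc_add_one_left_eq_Ioc 0 i]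
        have h2a : ∏ j ∈ Finset.Ioc 0 s₂, (1 - M j/(N:ℝ)) ≤ 1 := by
          rw [← Finset.Icc_add_one_left_eq_Ioc]
          exact Finset.prod_le_one (fun j hj => hx0 j (hsub s₂ hs₂Icc hj))
            (fun j hj => hx1 j (hsub s₂ hs₂Icc hj))
        have h2b0 : 0 ≤ ∏ j ∈ Finset.Ioc s₂ i, (1 - M j/(N:ℝ)) :=
          Finset.prod_nonneg (fun j hj => hx0 j (hioc j hj))
        have h2b : ∏ j ∈ Finset.Ioc s₂ i, (1 - M j/(N:ℝ)) ≤ r ^ (i - s₂) := by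
          have hpt : ∀ j ∈ Finset.Ioc s₂ i, (1 - M j/(N:ℝ)) ≤ r := by
            intro j hj
            rcases Finset.mem_Ioc.mp hj with ⟨hj1, hj2⟩
            have hmle : M (s₂+1) ≤ M j := hmono (s₂+1) hmem j (hioc j hj) (by omega)
            have hdd : M (s₂+1)/(N:ℝ) ≤ M j/(N:ℝ) := (div_le_div_iff_of_pos_right hNR).mpr hmle
            rw [hr]
            linarith
          calc ∏ j ∈ Finset.Ioc s₂ i, (1 - M j/(N:ℝ))
              ≤ ∏ _j ∈ Finset.Ioc s₂ i, r :=
                Finset.prod_le_prod (fun j hj => hx0 j (hioc j hj)) hpt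
            _ = r ^ (i - s₂) := by rw [Finset.prod_const, Nat.card_Ioc]
        calc ∏ j ∈ Finset.Icc 1 i, (1 - M j/(N:ℝ))
            = _ := hsplitP
          _ ≤ 1 * r ^ (i - s₂) := mul_le_mul h2a h2b h2b0 zero_le_one
          _ = r ^ (i - s₂) := one_mul _
      have htail : ∑ i ∈ Finset.Icc (s₂+1) K, ∏ j ∈ Finset.Icc 1 i, (1 - M j / (N:ℝ))
          ≤ r/(1-r) :=
        le_trans (Finset.sum_le_sum htail1) (geom_tail r hr0 hr1 s₂ K)
      have hrb : r/(1-r) ≤ 4*((s₂:ℝ)+1) - 1 := by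
        have h4 : (0:ℝ) < 4*((s₂:ℝ)+1) := by positivity
        have key : (1:ℝ) < (1 - r) * (4*((s₂:ℝ)+1)) := (div_lt_iff₀ h4).mp h1r
        rw [div_le_iff₀ (by linarith : (0:ℝ) < 1 - r)]
        nlinarith
      have hsplitsum := split_sum (fun i => ∏ j ∈ Finset.Icc 1 i, (1 - M j/(N:ℝ))) s₂ K hs₂K
      rw [hsplitsum]
      have hcases : s₂ = 1 ∨ s₂ = 2 ∨ 3 ≤ s₂ := by omega
      rcases hcases with h1 | h2 | h3
      · -- s₂ = 1 : T ≥ 3/4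
        have h1K : (1:ℕ) ∈ Finset.Icc 1 K := Finset.mem_Icc.mpr ⟨le_refl 1, hK⟩
        have hc := hcut 1 h1K
        have ha1 : M 1 ≤ (N:ℝ)/4 := by
          have h := hs₂a; rw [h1] at h
          simpa [Finset.Icc_self] using h
        have hM1N : M 1/(N:ℝ) ≤ 1/4 := by
          rw [div_le_div_iff₀ hNR (by norm_num : (0:ℝ) < 4)]
          linarith
        have hT34 : (3:ℝ)/4 ≤ T := by
          simp only [Finset.Icc_self, Finset.sum_singleton, Nat.div_one, Nat.cast_one] at hc
          linarith
        have hs₂cast : (s₂:ℝ) = 1 := by rw [h1]; norm_num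
        linarith [hhead, htail, hrb]
      · -- s₂ = 2 : T ≥ 5/4
        have hK3 : 3 ≤ K := by omega
        have hN3 : 3 ≤ N := le_trans hK3 hKN
        have h2K : (2:ℕ) ∈ Finset.Icc 1 K := Finset.mem_Icc.mpr ⟨by omega, by omega⟩
        have hc := hcut 2 h2K
        have hfl : (N:ℝ) ≤ 3*((N/2 : ℕ):ℝ) := by
          have : N ≤ 3*(N/2) := by omega
          exact_mod_cast this
        have hd2pos := hdpos 2 h2K
        have ha2 : (∑ i ∈ Finset.Icc 1 2, M i) ≤ (N:ℝ)/4 := by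
          have h := hs₂a; rw [h2] at h; exact h
        have hdiv : (∑ i ∈ Finset.Icc 1 2, M i) / ((N/2 : ℕ):ℝ) ≤ 3/4 := by
          rw [div_le_div_iff₀ hd2pos (by norm_num : (0:ℝ) < 4)]
          linarith
        have hT54 : (5:ℝ)/4 ≤ T := by
          have h2c : ((2:ℕ):ℝ) = 2 := by norm_num
          rw [h2c] at hc
          linarith
        have hs₂cast : (s₂:ℝ) = 2 := by rw [h2]; norm_num
        linarith [hhead, htail, hrb]
      · -- s₂ ≥ 3
        have h3R : (3:ℝ) ≤ (s₂:ℝ) := by exact_mod_cast h3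
        linarith
  · -- S empty : M 1 > N/4
    have h1K : (1:ℕ) ∈ Finset.Icc 1 K := Finset.mem_Icc.mpr ⟨le_refl 1, hK⟩
    have hM1 : (N:ℝ)/4 < M 1 := by
      by_contra h
      push_neg at h
      exact hS ⟨1, Finset.mem_filter.mpr ⟨h1K, by simpa [Finset.Icc_self] using h⟩⟩
    set r := 1 - M 1/(N:ℝ) with hr
    clear_value r
    have hr0 : 0 ≤ r := by rw [hr]; exact hx0 1 h1K
    have h1r : 1/4 < 1 - r := by
      rw [hr, show (1:ℝ) - (1 - M 1/(N:ℝ)) = M 1/(N:ℝ) by ring,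
        div_lt_div_iff₀ (by norm_num : (0:ℝ) < 4) hNR]
      linarith
    have hr1 : r < 1 := by linarith
    have hpt : ∀ i ∈ Finset.Icc 1 K,
        ∏ j ∈ Finset.Icc 1 i, (1 - M j/(N:ℝ)) ≤ r ^ i := by
      intro i hi
      have h1' : ∀ j ∈ Finset.Icc 1 i, (1 - M j/(N:ℝ)) ≤ r := by
        intro j hj
        have hjK := hsub i hi hj
        have hmle : M 1 ≤ M j := hmono 1 h1K j hjK (Finset.mem_Icc.mp hj).1
        have hdd : M 1/(N:ℝ) ≤ M j/(N:ℝ) := (div_le_div_iff_of_pos_right hNR).mpr hmle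
        rw [hr]
        linarith
      calc ∏ j ∈ Finset.Icc 1 i, (1 - M j/(N:ℝ))
          ≤ ∏ _j ∈ Finset.Icc 1 i, r :=
            Finset.prod_le_prod (fun j hj => hx0 j (hsub i hi hj)) h1'
        _ = r ^ i := by rw [Finset.prod_const, Nat.card_Icc]; simp
    have hTr : r ≤ T := by
      have hc := hcut 1 h1K
      simp only [Finset.Icc_self, Finset.sum_singleton, Nat.div_one, Nat.cast_one] at hc
      rw [hr]
      linarith
    have hg := geom_tail r hr0 hr1 0 K
    simp only [Nat.sub_zero, Nat.zero_add, zero_add] at hg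
    have hsum : ∑ i ∈ Finset.Icc 1 K, ∏ j ∈ Finset.Icc 1 i, (1 - M j/(N:ℝ))
        ≤ r/(1-r) := le_trans (Finset.sum_le_sum hpt) hg
    have hr4 : r/(1-r) ≤ 4*r := by
      rw [div_le_iff₀ (by linarith : (0:ℝ) < 1 - r)]
      nlinarith [mul_nonneg hr0 (by linarith : (0:ℝ) ≤ 4*(1-r)-1)]
    linarith
end
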